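/- Construction of a homotopy basis: Let Σ be a terminating generalised 2-polygraph that is closed under congruence, cancels inverses (for every step s : x ⤳ y there are rewrite zig-zags s·s⁻¹ ⇔* ε_x and s⁻¹·s ⇔* ε_y), cancels empty closed zig-zags (every closed zig-zag of length 0 at x can be rewritten to the trivial sequence ε_x), and admits a Winkler–Buchberger structure. Then Σ has a homotopy basis: for all parallel reduction zig-zags u, v : x ⇜⤳* y there is a rewrite zig-zag u ⇔* v. -/
import Mathlib


universe u v w

/-- Reduction sequences over a proof-relevant relation `R`: the inductive
reflexive-transitive closure. -/
inductive RSeq {A : Type u} (R : A → A → Type v) : A → A → Type (max u v)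
  | nil (x : A) : RSeq R x x
  | cons {x y z : A} : R x y → RSeq R y z → RSeq R x z

namespace RSeq

variable {A : Type u} {R : A → A → Type v}

/-- Concatenation of sequences. -/
def comp : ∀ {x y z : A}, RSeq R x y → RSeq R y z → RSeq R x z
  | _, _, _, .nil _, t => t
  | _, _, _, .cons s u, t => .cons s (comp u t)

/-- The length (number of steps) of a sequence. -/
def length : ∀ {x y : A}, RSeq R x y → Nat
  | _, _, .nil _ => 0
  | _, _, .cons _ u => u.length + 1

/-- The list of all objects visited by a sequence (including endpoints). -/
def objs : ∀ {x y : A}, RSeq R x y → List A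
  | x, _, .nil _ => [x]
  | x, _, .cons _ u => x :: objs u

/-- The inner (intermediate) objects of a sequence: all objects except the
first and the last. -/
def inner {x y : A} (u : RSeq R x y) : List A := (objs u).tail.dropLast

end RSeq

/-- The symmetric closure of a proof-relevant relation. -/
def RSym {A : Type u} (R : A → A → Type v) (x y : A) : Type v := Sum (R x y) (R y x)

/-- Inversion of a single symmetric-closure step. -/
def RSym.inv {A : Type u} {R : A → A → Type v} {x y : A} : RSym R x y → RSym R y x
  | .inl s => .inr s
  | .inr s => .inl s

/-- Reduction zig-zags: the symmetric-reflexive-transitive closure of `R`. -/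
abbrev ZigZag {A : Type u} (R : A → A → Type v) (x y : A) : Type (max u v) :=
  RSeq (RSym R) x y

/-- Inversion of a zig-zag. -/
def ZigZag.inv {A : Type u} {R : A → A → Type v} : ∀ {x y : A}, ZigZag R x y → ZigZag R y x
  | _, _, .nil x => .nil x
  | _, _, .cons s u => RSeq.comp (ZigZag.inv u) (.cons (RSym.inv s) (.nil _))

/-- The embedding of reduction sequences into zig-zags as positive zig-zags. -/
def RSeq.fwd {A : Type u} {R : A → A → Type v} : ∀ {x y : A}, RSeq R x y → ZigZag R x y
  | _, _, .nil x => .nil x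
  | _, _, .cons s u => .cons (Sum.inl s) (RSeq.fwd u)

/-- The local peak `y ⬿ x ⤳ z` determined by two reduction steps out of `x`,
viewed as a zig-zag from `y` to `z`. -/
def ZigZag.peak {A : Type u} {R : A → A → Type v} {x y z : A}
    (s : R x y) (t : R x z) : ZigZag R y z :=
  .cons (Sum.inr s) (.cons (Sum.inl t) (.nil z))

/-- Rewrite zig-zags `u ⇔* v` between parallel reduction zig-zags, relative to a
family `R2` of rewrite steps: the symmetric-reflexive-transitive closure of `R2`. -/
abbrev RW {A : Type u} {R : A → A → Type v}
    (R2 : ∀ (x y : A), ZigZag R x y → ZigZag R x y → Type w)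
    {x y : A} (u v : ZigZag R x y) : Type (max u v w) :=
  RSeq (RSym (R2 x y)) u v

namespace HBasisAux

variable {A : Type u} {R : A → A → Type v}

theorem comp_nil : ∀ {x y : A} (u : RSeq R x y), u.comp (.nil y) = u := by
  intro x y u
  induction u with
  | nil _ => rfl
  | cons s u ih => simp [RSeq.comp, ih]

theorem comp_assoc : ∀ {x y z w : A} (u : RSeq R x y) (v : RSeq R y z) (t : RSeq R z w),
    (u.comp v).comp t = u.comp (v.comp t) := by
  intro x y z w u v t
  induction u with
  | nil _ => rfl
  | cons s u ih => simp [RSeq.comp, ih]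

theorem fwd_comp : ∀ {x y z : A} (u : RSeq R x y) (v : RSeq R y z),
    (u.comp v).fwd = u.fwd.comp v.fwd := by
  intro x y z u v
  induction u with
  | nil _ => rfl
  | cons s u ih => simp [RSeq.comp, RSeq.fwd, ih]

theorem inv_comp : ∀ {x y z : A} (u : ZigZag R x y) (v : ZigZag R y z),
    ZigZag.inv (u.comp v) = (ZigZag.inv v).comp (ZigZag.inv u) := by
  intro x y z u v
  induction u with
  | nil _ => exact (comp_nil _).symm
  | cons s u ih => simp [RSeq.comp, ZigZag.inv, ih, comp_assoc]

theorem objs_ne_nil : ∀ {x y : A} (u : RSeq R x y), u.objs ≠ [] := by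
  intro x y u
  cases u <;> simp [RSeq.objs]

theorem objs_dropLast : ∀ {x y : A} (u : RSeq R x y), u.objs.dropLast ++ [y] = u.objs := by
  intro x y u
  induction u with
  | nil _ => rfl
  | cons s u ih =>
    simp only [RSeq.objs, List.dropLast_cons_of_ne_nil (objs_ne_nil u), List.cons_append, ih]

theorem objs_comp : ∀ {x y z : A} (u : RSeq R x y) (v : RSeq R y z),
    (u.comp v).objs = u.objs.dropLast ++ v.objs := by
  intro x y z u v
  induction u with
  | nil _ => rfl
  | cons s u ih =>
    simp only [RSeq.comp, RSeq.objs, List.dropLast_cons_of_ne_nil (objs_ne_nil u),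
      List.cons_append, ih]

theorem gt_of_cons {gt : A → A → Prop} (gt_trans : Transitive gt)
    (step_gt : ∀ {x y : A}, R x y → gt x y) :
    ∀ {x y z : A}, R x y → RSeq R y z → gt x z := by
  intro x y z s u
  induction u generalizing x with
  | nil _ => exact step_gt s
  | cons t u ih => exact gt_trans (step_gt s) (ih t)

section RW2

variable {R2 : ∀ (x y : A), ZigZag R x y → ZigZag R x y → Type w}

def rwSymm {x y : A} {u v : ZigZag R x y} (h : RW R2 u v) : RW R2 v u := ZigZag.inv h

def rwTrans {x y : A} {u v t : ZigZag R x y} (h : RW R2 u v) (h' : RW R2 v t) : RW R2 u t :=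
  RSeq.comp h h'

abbrev CCty (R2 : ∀ (x y : A), ZigZag R x y → ZigZag R x y → Type w) :=
  ∀ {x y y' z : A} (u : ZigZag R x y) (v : ZigZag R y' z)
      {p q : ZigZag R y y'}, RW R2 p q →
      RW R2 (u.comp (p.comp v)) (u.comp (q.comp v))

theorem congrR (CC : CCty R2) {x y z : A} {p q : ZigZag R x y} (h : RW R2 p q)
    (v : ZigZag R y z) : Nonempty (RW R2 (p.comp v) (q.comp v)) :=
  ⟨CC (.nil x) v h⟩

theorem congrL (CC : CCty R2) {x y z : A} (u : ZigZag R x y) {p q : ZigZag R y z}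
    (h : RW R2 p q) : Nonempty (RW R2 (u.comp p) (u.comp q)) := by
  have h1 := CC u (.nil z) h
  rw [comp_nil, comp_nil] at h1
  exact ⟨h1⟩

abbrev RIty (R2 : ∀ (x y : A), ZigZag R x y → ZigZag R x y → Type w) :=
  ∀ {x y : A} (s : R x y),
    RW R2 (RSeq.cons (Sum.inl s) (RSeq.cons (Sum.inr s) (RSeq.nil x))) (RSeq.nil x)

abbrev LIty (R2 : ∀ (x y : A), ZigZag R x y → ZigZag R x y → Type w) :=
  ∀ {x y : A} (s : R x y),
    RW R2 (RSeq.cons (Sum.inr s) (RSeq.cons (Sum.inl s) (RSeq.nil y))) (RSeq.nil y)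

theorem invCancelL (CC : CCty R2) (RI : RIty R2) (LI : LIty R2) :
    ∀ {x y : A} (u : ZigZag R x y), Nonempty (RW R2 ((ZigZag.inv u).comp u) (.nil y)) := by
  intro x y u
  induction u with
  | nil _ => exact ⟨.nil _⟩
  | @cons x x₁ y a u ih =>
    obtain ⟨ih⟩ := ih
    have hpq : RW R2 (RSeq.cons a.inv (RSeq.cons a (RSeq.nil x₁))) (RSeq.nil x₁) := by
      cases a with
      | inl s => exact LI s
      | inr s => exact RI s
    have h1 := CC (ZigZag.inv u) u hpq
    have goal2 : RW R2 ((ZigZag.inv (RSeq.cons a u)).comp (RSeq.cons a u)) (.nil y) := by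
      rw [show ZigZag.inv (RSeq.cons a u) = (ZigZag.inv u).comp (.cons a.inv (.nil x)) from rfl,
        comp_assoc]
      exact rwTrans h1 ih
    exact ⟨goal2⟩

theorem invCancelR (CC : CCty R2) (RI : RIty R2) (LI : LIty R2) :
    ∀ {x y : A} (u : ZigZag R x y), Nonempty (RW R2 (u.comp (ZigZag.inv u)) (.nil x)) := by
  intro x y u
  induction u with
  | nil _ => exact ⟨.nil _⟩
  | @cons x x₁ y a u ih =>
    obtain ⟨ih⟩ := ih
    have h1 := CC (RSeq.cons a (RSeq.nil x₁)) (RSeq.cons a.inv (RSeq.nil x)) ih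
    have h2 : RW R2 (RSeq.cons a (RSeq.cons a.inv (RSeq.nil x))) (RSeq.nil x) := by
      cases a with
      | inl s => exact RI s
      | inr s => exact LI s
    have goal2 : RW R2 ((RSeq.cons a u).comp (ZigZag.inv (RSeq.cons a u))) (.nil x) := by
      show RW R2 (RSeq.cons a (u.comp ((ZigZag.inv u).comp (.cons a.inv (.nil x))))) (.nil x)
      rw [← comp_assoc]
      exact rwTrans h1 h2
    exact ⟨goal2⟩

end RW2

theorem findPeak : ∀ {y z : A} (w : ZigZag R y z),
    (∃ (n : A) (d₁ : RSeq R y n) (d₂ : RSeq R z n), w = d₁.fwd.comp (ZigZag.inv d₂.fwd)) ∨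
    (∃ (b a c : A) (s : R a b) (t : R a c) (l : ZigZag R y b) (r : ZigZag R c z),
       w = l.comp (.cons (.inr s) (.cons (.inl t) r))) := by
  intro y z w
  induction w with
  | nil x => exact Or.inl ⟨x, .nil x, .nil x, rfl⟩
  | @cons x x₁ z a w ih =>
    cases a with
    | inl s =>
      rcases ih with ⟨n, d₁, d₂, h⟩ | ⟨b, a', c, s', t, l, r, h⟩
      · exact Or.inl ⟨n, .cons s d₁, d₂, by rw [h]; rfl⟩
      · exact Or.inr ⟨b, a', c, s', t, .cons (.inl s) l, r, by rw [h]; rfl⟩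
    | inr s =>
      rcases ih with ⟨n, d₁, d₂, h⟩ | ⟨b, a', c, s', t, l, r, h⟩
      · cases d₁ with
        | nil =>
          refine Or.inl ⟨x, .nil x, d₂.comp (.cons s (.nil x)), ?_⟩
          rw [fwd_comp, inv_comp, h]
          rfl
        | @cons _ c₁ _ t d₁' =>
          exact Or.inr ⟨x, x₁, c₁, s, t, .nil x, d₁'.fwd.comp (ZigZag.inv d₂.fwd),
            by rw [h]; rfl⟩
      · exact Or.inr ⟨b, a', c, s', t, .cons (.inr s) l, r, by rw [h]; rfl⟩

end HBasisAux

namespace HBasisAux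

theorem closedNil {A : Type u} {R : A → A → Type v}
    {R2 : ∀ (x y : A), ZigZag R x y → ZigZag R x y → Type w}
    (gt : A → A → Prop) (gt_trans : Transitive gt)
    (gt_noeth : WellFounded (fun a b => gt b a))
    (step_gt : ∀ {x y : A}, R x y → gt x y)
    (CC : CCty R2) (RI : RIty R2) (LI : LIty R2)
    (cancelEmpty : ∀ {x : A} (u : ZigZag R x x), RSeq.length u = 0 → RW R2 u (RSeq.nil x))
    (wb : ∀ {x y z : A} (s : R x y) (t : R x z),
      Σ (p : ZigZag R y z),
        PProd (∀ m ∈ RSeq.inner p, gt x m) (RW R2 (ZigZag.peak s t) p)) :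
    ∀ {x : A} (u : ZigZag R x x), Nonempty (RW R2 u (RSeq.nil x)) := by
  have irr : ∀ z : A, ¬ gt z z := by
    intro z
    have hacc : Acc (fun a b => gt b a) z := gt_noeth.apply z
    induction hacc with
    | intro z h ih => exact fun hz => ih z hz hz
  set lt' : A → A → Prop := fun a b => gt b a with hlt'
  have wf2 : WellFounded (Relation.TransGen (Relation.CutExpand lt')) :=
    (gt_noeth.cutExpand).transGen
  have main : ∀ M : Multiset A, ∀ (x : A) (u : ZigZag R x x),
      ((RSeq.objs u : Multiset A) = M) → Nonempty (RW R2 u (RSeq.nil x)) := by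
    intro M
    induction M using wf2.induction with
    | _ M IH =>
      intro x u hM
      subst hM
      rcases findPeak u with ⟨n, d₁, d₂, h⟩ | ⟨b, a, c, s, t, l, r, h⟩
      · -- valley case
        cases d₁ with
        | nil =>
          cases d₂ with
          | nil => subst h; exact ⟨cancelEmpty _ rfl⟩
          | cons t₂ d₂' => exact absurd (gt_of_cons gt_trans step_gt t₂ d₂') (irr x)
        | @cons _ x₁ _ s₁ d₁' =>
          -- rotation case
          subst h
          set m' : ZigZag R x₁ x := d₁'.fwd.comp (ZigZag.inv d₂.fwd) with hm'
          set e : ZigZag R x x₁ := RSeq.cons (Sum.inl s₁) (RSeq.nil x₁) with he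
          set eb : ZigZag R x₁ x := RSeq.cons (Sum.inr s₁) (RSeq.nil x) with heb
          set w₂ : ZigZag R x₁ x₁ := m'.comp e with hw₂
          have hdec : Relation.TransGen (Relation.CutExpand lt')
              (RSeq.objs w₂ : Multiset A)
              (RSeq.objs ((RSeq.cons s₁ d₁').fwd.comp (ZigZag.inv d₂.fwd)) : Multiset A) := by
            apply Relation.TransGen.single
            refine ⟨{x₁}, x, ?_, ?_⟩
            · intro a' ha'
              simp only [Multiset.mem_singleton] at ha'
              subst ha'
              exact step_gt s₁
            · have h1 : RSeq.objs ((RSeq.cons s₁ d₁').fwd.comp (ZigZag.inv d₂.fwd))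
                  = x :: RSeq.objs m' := rfl
              have h2 : RSeq.objs w₂ = (RSeq.objs m').dropLast ++ [x, x₁] := by
                rw [hw₂, objs_comp]
                rfl
              have h3 : (RSeq.objs m').dropLast ++ [x] = RSeq.objs m' := objs_dropLast m'
              rw [h1, h2, ← h3]
              simp only [← Multiset.cons_coe, ← Multiset.coe_add]
              simp [List.append_assoc]
              rw [add_right_comm]
          obtain ⟨h₂⟩ := IH _ hdec x₁ w₂ rfl
          obtain ⟨k1'⟩ := congrL CC m' (RI s₁)
          rw [comp_nil] at k1'
          have k1 : RW R2 m' (m'.comp (e.comp eb)) :=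
            rwSymm (show RW R2 (m'.comp (e.comp eb)) m' from k1')
          have k2 : m'.comp (e.comp eb) = w₂.comp eb := (comp_assoc m' e eb).symm
          obtain ⟨k3⟩ := congrR CC h₂ eb
          have k23 : RW R2 (m'.comp (e.comp eb)) eb := by
            rw [k2]; exact k3
          have k4 : RW R2 m' eb := rwTrans k1 k23
          obtain ⟨k5⟩ := congrL CC e k4
          have k6 : RW R2 (e.comp eb) (RSeq.nil x) := RI s₁
          exact ⟨show RW R2 ((RSeq.cons s₁ d₁').fwd.comp (ZigZag.inv d₂.fwd)) (RSeq.nil x) from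
            rwTrans k5 k6⟩
      · -- peak case
        subst h
        obtain ⟨p, hp⟩ := wb s t
        have k : RW R2 (l.comp ((ZigZag.peak s t).comp r)) (l.comp (p.comp r)) :=
          CC l r hp.2
        set w₂ : ZigZag R _ _ := l.comp (p.comp r) with hw₂
        have h1 : RSeq.objs (l.comp (RSeq.cons (Sum.inr s) (RSeq.cons (Sum.inl t) r)))
            = (RSeq.objs l).dropLast ++ (b :: a :: RSeq.objs r) := by
          rw [objs_comp]; rfl
        have h2 : RSeq.objs w₂
            = (RSeq.objs l).dropLast ++ ((RSeq.objs p).dropLast ++ RSeq.objs r) := by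
          rw [hw₂, objs_comp, objs_comp]
        have hdec : Relation.TransGen (Relation.CutExpand lt')
            (RSeq.objs w₂ : Multiset A)
            (RSeq.objs (l.comp (RSeq.cons (Sum.inr s) (RSeq.cons (Sum.inl t) r))) : Multiset A) := by
          rw [h1, h2]
          cases p with
          | nil =>
            refine Relation.TransGen.head (b := (((RSeq.objs l).dropLast ++ (b :: RSeq.objs r) : List A) : Multiset A)) ?_ (Relation.TransGen.single ?_)
            · refine ⟨0, b, by simp, ?_⟩
              simp only [← Multiset.cons_coe, ← Multiset.coe_add, RSeq.objs, List.dropLast]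
              simp only [← Multiset.singleton_add, List.nil_append]
              abel
            · refine ⟨0, a, by simp, ?_⟩
              simp only [← Multiset.cons_coe, ← Multiset.coe_add]
              simp only [← Multiset.singleton_add]
              abel
          | @cons _ b₁ _ a₀ p' =>
            apply Relation.TransGen.single
            refine ⟨((RSeq.objs p').dropLast : List A), a, ?_, ?_⟩
            · intro m hm
              apply hp.1
              simpa [RSeq.inner, RSeq.objs] using hm
            · simp only [RSeq.objs, List.dropLast_cons_of_ne_nil (objs_ne_nil p')]
              simp only [← Multiset.cons_coe, ← Multiset.coe_add]
              simp only [← Multiset.singleton_add]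
              abel
        obtain ⟨h₂⟩ := IH _ hdec _ w₂ rfl
        exact ⟨rwTrans
          (show RW R2 (l.comp (RSeq.cons (Sum.inr s) (RSeq.cons (Sum.inl t) r))) w₂ from k) h₂⟩
  intro x u
  exact main _ x u rfl

end HBasisAux

/-- Construction of a homotopy basis: a terminating generalised
2-polygraph which is closed under congruence, cancels inverses, cancels empty
closed zig-zags, and admits a Winkler–Buchberger structure has a homotopy basis:
for all parallel reduction zig-zags `u v : x ⇜⤳* y` there is a rewrite zig-zag
`u ⇔* v`. -/
theorem homotopy_basis {A : Type u} (R : A → A → Type v)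
    (R2 : ∀ (x y : A), ZigZag R x y → ZigZag R x y → Type w)
    -- terminating: a transitive Noetherian order `>` compatible with reduction steps
    (gt : A → A → Prop) (gt_trans : Transitive gt)
    (gt_noeth : WellFounded (fun a b => gt b a))
    (step_gt : ∀ {x y : A}, R x y → gt x y)
    -- closed under congruence
    (congrClosed : ∀ {x y y' z : A} (u : ZigZag R x y) (v : ZigZag R y' z)
      {p q : ZigZag R y y'}, RW R2 p q →
      RW R2 (u.comp (p.comp v)) (u.comp (q.comp v)))
    -- cancels inverses: `s · s⁻¹ ⇔* ε_x` and `s⁻¹ · s ⇔* ε_y` for every step `s : x ⤳ y`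
    (rinv : ∀ {x y : A} (s : R x y),
      RW R2 (RSeq.cons (Sum.inl s) (RSeq.cons (Sum.inr s) (RSeq.nil x))) (RSeq.nil x))
    (linv : ∀ {x y : A} (s : R x y),
      RW R2 (RSeq.cons (Sum.inr s) (RSeq.cons (Sum.inl s) (RSeq.nil y))) (RSeq.nil y))
    -- cancels empty closed zig-zags
    (cancelEmpty : ∀ {x : A} (u : ZigZag R x x), RSeq.length u = 0 → RW R2 u (RSeq.nil x))
    -- Winkler–Buchberger structure
    (wb : ∀ {x y z : A} (s : R x y) (t : R x z),
      Σ (p : ZigZag R y z),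
        PProd (∀ m ∈ RSeq.inner p, gt x m) (RW R2 (ZigZag.peak s t) p)) :
    ∀ {x y : A} (u v : ZigZag R x y), Nonempty (RW R2 u v) := by
  
  intro x y u v
  obtain ⟨h⟩ := HBasisAux.closedNil gt gt_trans gt_noeth @step_gt @congrClosed @rinv @linv
    @cancelEmpty @wb (u.comp (ZigZag.inv v))
  obtain ⟨k0⟩ := HBasisAux.invCancelL @congrClosed @rinv @linv v
  obtain ⟨k1⟩ := HBasisAux.congrL @congrClosed u k0
  rw [HBasisAux.comp_nil] at k1
  obtain ⟨k2⟩ := HBasisAux.congrR @congrClosed h v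
  have k3 : RW R2 (u.comp ((ZigZag.inv v).comp v)) v := by
    rw [← HBasisAux.comp_assoc]; exact k2
  exact ⟨HBasisAux.rwTrans (HBasisAux.rwSymm k1) k3⟩
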